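/- Let n ≥ 2 and k, l be integers with gcd(n, k, l) = 1 such that none of the nine conditions (B.0), (B.1), (B.2), (C.0), (C.1), (C.2), (D.0), (D.1), (D.2) hold. If for some j ∈ {0,1,2} both (F1.j) and (F2.(2−j)) hold (condition indices read mod 3), then n = 8 or n = 24. -/

import Mathlib

/-- `c ≡ ±n/p (mod n)`: `p` divides `n`, and `c ≡ n/p` or `c ≡ -n/p (mod n)`. -/
def pmMod (n p c : ℤ) : Prop := p ∣ n ∧ (n ∣ (c - n / p) ∨ n ∣ (c + n / p))

/-- Conditions (B.0), (B.1), (B.2). -/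
def condB (n k l : ℤ) : ZMod 3 → Prop := fun j =>
  if j = 0 then n ∣ (2 * k - l) else if j = 1 then n ∣ (2 * l - k) else n ∣ (k + l)

/-- Conditions (C.0), (C.1), (C.2). -/
def condC (n k l : ℤ) : ZMod 3 → Prop := fun j =>
  if j = 0 then pmMod n 3 l else if j = 1 then pmMod n 3 k else pmMod n 3 (k - l)

/-- Conditions (D.0), (D.1), (D.2). -/
def condD (n k l : ℤ) : ZMod 3 → Prop := fun j =>
  if j = 0 then 2 ∣ n ∧ n ∣ (2 * k - l - n / 2)
  else if j = 1 then 2 ∣ n ∧ n ∣ (2 * l - k - n / 2)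
  else 2 ∣ n ∧ n ∣ (k + l - n / 2)

/-- Conditions (E.0), (E.1), (E.2). -/
def condE (n k l : ℤ) : ZMod 3 → Prop := fun j =>
  if j = 0 then pmMod n 3 (2 * k - l) else if j = 1 then pmMod n 3 (2 * l - k)
  else pmMod n 3 (k + l)

/-- Conditions (F1.0), (F1.1), (F1.2). -/
def condF1 (n k l : ℤ) : ZMod 3 → Prop := fun j =>
  if j = 0 then n ∣ (5 * k - l) else if j = 1 then n ∣ (5 * l - 4 * k) else n ∣ (k + 4 * l)

/-- Conditions (F2.0), (F2.1), (F2.2). -/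
def condF2 (n k l : ℤ) : ZMod 3 → Prop := fun j =>
  if j = 0 then n ∣ (4 * l - 5 * k) else if j = 1 then n ∣ (4 * k + l) else n ∣ (5 * l - k)

set_option maxHeartbeats 1600000 in
theorem stmt5 (n : ℕ) (hn : 2 ≤ n) (k l : ℤ)
    (hgcd : Int.gcd (n : ℤ) ((Int.gcd k l : ℤ)) = 1)
    (hB : ∀ j : ZMod 3, ¬ condB n k l j)
    (hC : ∀ j : ZMod 3, ¬ condC n k l j)
    (hD : ∀ j : ZMod 3, ¬ condD n k l j)
    (h : ∃ j : ZMod 3, condF1 n k l j ∧ condF2 n k l (2 - j)) :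
    n = 8 ∨ n = 24 := by
  obtain ⟨j, hF1, hF2⟩ := h
  have hF : ((n:ℤ) ∣ 5*k-l ∧ (n:ℤ) ∣ 5*l-k) ∨ ((n:ℤ) ∣ 5*l-4*k ∧ (n:ℤ) ∣ 4*k+l)
      ∨ ((n:ℤ) ∣ k+4*l ∧ (n:ℤ) ∣ 4*l-5*k) := by
    fin_cases j <;> simp [condF1, condF2] at hF1 hF2 <;> tauto
  have hk24 : (n:ℤ) ∣ 24*k := by
    rcases hF with ⟨⟨a,ha⟩,⟨b,hb⟩⟩|⟨⟨a,ha⟩,⟨b,hb⟩⟩|⟨⟨a,ha⟩,⟨b,hb⟩⟩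
    exacts [⟨5*a+b, by linarith⟩, ⟨-a+5*b, by linarith⟩, ⟨4*a-4*b, by linarith⟩]
  have hl24 : (n:ℤ) ∣ 24*l := by
    rcases hF with ⟨⟨a,ha⟩,⟨b,hb⟩⟩|⟨⟨a,ha⟩,⟨b,hb⟩⟩|⟨⟨a,ha⟩,⟨b,hb⟩⟩
    exacts [⟨a+5*b, by linarith⟩, ⟨4*a+4*b, by linarith⟩, ⟨5*a+b, by linarith⟩]
  have h24 : n ∣ 24 := by
    have hg : (n:ℤ) ∣ (24 * Int.gcd k l : ℤ) := by
      have := Int.dvd_coe_gcd hk24 hl24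
      rwa [Int.gcd_mul_left, Int.natCast_mul] at this
    have hco : Nat.Coprime n (Int.gcd k l) := by
      rwa [Int.gcd_natCast_natCast] at hgcd
    have : n ∣ 24 * Int.gcd k l := by exact_mod_cast hg
    exact hco.dvd_of_dvd_mul_right this
  have hg2 : ¬((2:ℤ) ∣ (n:ℤ) ∧ 2 ∣ k ∧ 2 ∣ l) := by
    rintro ⟨h1, h2, h3⟩
    have : (2:ℤ) ∣ (Int.gcd (n:ℤ) (Int.gcd k l : ℤ) : ℤ) := Int.dvd_coe_gcd h1 (Int.dvd_coe_gcd h2 h3)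
    rw [hgcd] at this; norm_num at this
  have hg3 : ¬((3:ℤ) ∣ (n:ℤ) ∧ 3 ∣ k ∧ 3 ∣ l) := by
    rintro ⟨h1, h2, h3⟩
    have : (3:ℤ) ∣ (Int.gcd (n:ℤ) (Int.gcd k l : ℤ) : ℤ) := Int.dvd_coe_gcd h1 (Int.dvd_coe_gcd h2 h3)
    rw [hgcd] at this; norm_num at this
  have hB0 : ¬ (n:ℤ) ∣ (2*k-l) := hB 0
  have hB1 : ¬ (n:ℤ) ∣ (2*l-k) := hB 1
  have hB2 : ¬ (n:ℤ) ∣ (k+l) := hB 2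
  have hC0 : ¬ ((3:ℤ) ∣ (n:ℤ) ∧ ((n:ℤ) ∣ (l - (n:ℤ)/3) ∨ (n:ℤ) ∣ (l + (n:ℤ)/3))) := hC 0
  have hC1 : ¬ ((3:ℤ) ∣ (n:ℤ) ∧ ((n:ℤ) ∣ (k - (n:ℤ)/3) ∨ (n:ℤ) ∣ (k + (n:ℤ)/3))) := hC 1
  have hC2 : ¬ ((3:ℤ) ∣ (n:ℤ) ∧ ((n:ℤ) ∣ (k - l - (n:ℤ)/3) ∨ (n:ℤ) ∣ (k - l + (n:ℤ)/3))) := hC 2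
  have hD0 : ¬ ((2:ℤ) ∣ (n:ℤ) ∧ (n:ℤ) ∣ (2*k - l - (n:ℤ)/2)) := hD 0
  have hD1 : ¬ ((2:ℤ) ∣ (n:ℤ) ∧ (n:ℤ) ∣ (2*l - k - (n:ℤ)/2)) := hD 1
  have hD2 : ¬ ((2:ℤ) ∣ (n:ℤ) ∧ (n:ℤ) ∣ (k + l - (n:ℤ)/2)) := hD 2
  clear hB hC hD hF1 hF2 hgcd hk24 hl24
  have hmem : n = 2 ∨ n = 3 ∨ n = 4 ∨ n = 6 ∨ n = 8 ∨ n = 12 ∨ n = 24 := by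
    clear * - h24 hn
    have hle : n ≤ 24 := Nat.le_of_dvd (by norm_num) h24
    interval_cases n <;> omega
  rcases hmem with rfl|rfl|rfl|rfl|rfl|rfl|rfl
  · exfalso
    norm_num at hg2 hg3 hB0 hB1 hB2 hC0 hC1 hC2 hD0 hD1 hD2 hF
    omega
  · exfalso
    norm_num at hg2 hg3 hB0 hB1 hB2 hC0 hC1 hC2 hD0 hD1 hD2 hF
    omega
  · exfalso
    norm_num at hg2 hg3 hB0 hB1 hB2 hC0 hC1 hC2 hD0 hD1 hD2 hF
    omega
  · exfalso
    norm_num at hg2 hg3 hB0 hB1 hB2 hC0 hC1 hC2 hD0 hD1 hD2 hF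
    omega
  · left; rfl
  · exfalso
    norm_num at hg2 hg3 hB0 hB1 hB2 hC0 hC1 hC2 hD0 hD1 hD2 hF
    omega
  · right; rfl
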